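/- Let E be a real inner product space and let p be real with 1 < p < 2. Then there exists a constant C_p > 0 such that for all a, b ∈ E with (a, b) ≠ (0, 0), ⟨‖a‖^{p-2} a - ‖b‖^{p-2} b, a - b⟩ ≥ C_p ‖a - b‖² / (‖a‖ + ‖b‖)^{2-p}, where ‖ξ‖^{p-2} ξ is interpreted as 0 when ξ = 0. -/

import Mathlib

open Real

-- concavity/Bernoulli: for 0 ≤ y ≤ x, 0 < x, r = p-1 ∈ (0,1):
-- x^(p-1) - y^(p-1) ≥ (p-1) x^(p-2) (x-y)
lemma auxA (p x y : ℝ) (hp1 : 1 < p) (hp2 : p < 2) (hy : 0 ≤ y) (hyx : y ≤ x) (hx : 0 < x) :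
    (p - 1) * x ^ (p - 2) * (x - y) ≤ x ^ (p - 1) - y ^ (p - 1) := by
  have hs : -1 ≤ y / x - 1 := by
    have : 0 ≤ y / x := div_nonneg hy hx.le
    linarith
  have hb := rpow_one_add_le_one_add_mul_self hs (by linarith : (0:ℝ) ≤ p - 1) (by linarith)
  -- (1 + (y/x - 1))^(p-1) ≤ 1 + (p-1)(y/x-1)
  rw [show (1 + (y / x - 1)) = y / x by ring] at hb
  have hxne : x ≠ 0 := hx.ne'
  have h1 : (y / x) ^ (p - 1) = y ^ (p - 1) / x ^ (p - 1) :=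
    Real.div_rpow hy hx.le _
  rw [h1] at hb
  have hxp : (0:ℝ) < x ^ (p - 1) := Real.rpow_pos_of_pos hx _
  have := mul_le_mul_of_nonneg_left hb hxp.le
  rw [mul_div_cancel₀ _ hxp.ne'] at this
  -- y^(p-1) ≤ x^(p-1) * (1 + (p-1)(y/x-1))
  have hx2 : x ^ (p - 1) * ((p-1) * (y/x - 1)) = (p-1) * x^(p-2) * (y - x) := by
    have : x ^ (p - 1) / x = x ^ (p - 2) := by
      rw [← Real.rpow_sub_one hxne]; ring_nf
    field_simp
    rw [← this]
    field_simp
  nlinarith [this, hx2]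

lemma auxB (p x y : ℝ) (hp1 : 1 < p) (hp2 : p < 2) (hx : 0 ≤ x) (hy : 0 ≤ y) :
    (x + y) ^ (p - 1) ≤ x ^ (p - 1) + y ^ (p - 1) := by
  rcases eq_or_lt_of_le hx with h | hx0
  · simp [← h, Real.zero_rpow (by linarith : p - 1 ≠ 0)]
  rcases eq_or_lt_of_le hy with h | hy0
  · simp [← h, Real.zero_rpow (by linarith : p - 1 ≠ 0)]
  have hxy : 0 < x + y := by linarith
  have h1 : (x + y) ^ (p - 2) ≤ x ^ (p - 2) :=
    Real.rpow_le_rpow_of_nonpos hx0 (by linarith) (by linarith)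
  have h2 : (x + y) ^ (p - 2) ≤ y ^ (p - 2) :=
    Real.rpow_le_rpow_of_nonpos hy0 (by linarith) (by linarith)
  have e : (x + y) ^ (p - 1) = (x + y) ^ (p - 2) * x + (x + y) ^ (p - 2) * y := by
    rw [← mul_add, ← Real.rpow_add_one hxy.ne']
    ring_nf
  have ex : x ^ (p - 2) * x = x ^ (p - 1) := by
    rw [← Real.rpow_add_one hx0.ne']; ring_nf
  have ey : y ^ (p - 2) * y = y ^ (p - 1) := by
    rw [← Real.rpow_add_one hy0.ne']; ring_nf
  calc (x + y) ^ (p - 1) = (x + y) ^ (p - 2) * x + (x + y) ^ (p - 2) * y := e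
    _ ≤ x ^ (p - 2) * x + y ^ (p - 2) * y := by
        gcongr
    _ = x ^ (p - 1) + y ^ (p - 1) := by rw [ex, ey]

lemma auxC (p x y : ℝ) (hp1 : 1 < p) (hp2 : p < 2) (hy : 0 ≤ y) (hyx : y ≤ x)
    (hxy : 0 < x + y) :
    (p - 1) * (x - y) ^ 2 * (x + y) ^ (p - 2) ≤ (x ^ (p - 1) - y ^ (p - 1)) * (x - y) := by
  have hx : 0 < x := by
    by_contra h
    push_neg at h
    have : y = 0 := le_antisymm (hyx.trans h) hy
    linarith
  have hA := auxA p x y hp1 hp2 hy hyx hx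
  have hmono : (x + y) ^ (p - 2) ≤ x ^ (p - 2) :=
    Real.rpow_le_rpow_of_nonpos hx (by linarith) (by linarith)
  have hnn : (0:ℝ) ≤ (p - 1) * (x - y) ^ 2 := mul_nonneg (by linarith) (sq_nonneg _)
  have h1 : (p - 1) * (x - y) ^ 2 * (x + y) ^ (p - 2) ≤ (p - 1) * (x - y) ^ 2 * x ^ (p - 2) :=
    mul_le_mul_of_nonneg_left hmono hnn
  have h2 : (p - 1) * (x - y) ^ 2 * x ^ (p - 2) ≤ (x ^ (p - 1) - y ^ (p - 1)) * (x - y) := by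
    have hxy0 : 0 ≤ x - y := by linarith
    nlinarith [mul_le_mul_of_nonneg_right hA hxy0]
  linarith

lemma key (p x y t : ℝ) (hp1 : 1 < p) (hp2 : p < 2) (hx : 0 ≤ x) (hy : 0 ≤ y)
    (hxy : 0 < x + y) (ht1 : -(x * y) ≤ t) (ht2 : t ≤ x * y) :
    (p - 1) * (x ^ 2 + y ^ 2 - 2 * t) / (x + y) ^ (2 - p) ≤
      x ^ (p - 2) * x ^ 2 + y ^ (p - 2) * y ^ 2 - (x ^ (p - 2) + y ^ (p - 2)) * t := by
  have hDpos : (0:ℝ) < (x + y) ^ (2 - p) := Real.rpow_pos_of_pos hxy _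
  set D := (x + y) ^ (2 - p) with hDdef
  have e1 : ∀ z : ℝ, 0 ≤ z → z ^ (p - 2) * z = z ^ (p - 1) := by
    intro z hz
    rcases eq_or_lt_of_le hz with h | h
    · rw [← h, Real.zero_rpow (by linarith : p - 2 ≠ 0),
        Real.zero_rpow (by linarith : p - 1 ≠ 0), mul_zero]
    · rw [← Real.rpow_add_one h.ne']; ring_nf
  have ex1 := e1 x hx
  have ey1 := e1 y hy
  have exs : x ^ (p - 2) * x ^ 2 = x ^ (p - 1) * x := by linear_combination x * ex1
  have eys : y ^ (p - 2) * y ^ 2 = y ^ (p - 1) * y := by linear_combination y * ey1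
  have hDinv : (x + y) ^ (p - 2) * D = 1 := by
    rw [hDdef, ← Real.rpow_add hxy]; norm_num
  have hDp : D * (x + y) ^ (p - 1) = x + y := by
    rw [hDdef, ← Real.rpow_add hxy]
    have h : 2 - p + (p - 1) = 1 := by ring
    rw [h, Real.rpow_one]
  have hB := auxB p x y hp1 hp2 hx hy
  -- endpoint t = -xy
  have hE1 : (p - 1) * (x + y) ^ 2 ≤
      (x ^ (p - 2) * x ^ 2 + y ^ (p - 2) * y ^ 2 + (x ^ (p - 2) + y ^ (p - 2)) * (x * y)) * D := by
    have hsum : x ^ (p - 2) * x ^ 2 + y ^ (p - 2) * y ^ 2 + (x ^ (p - 2) + y ^ (p - 2)) * (x * y)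
        = (x ^ (p - 1) + y ^ (p - 1)) * (x + y) := by
      linear_combination (x + y) * ex1 + (x + y) * ey1
    rw [hsum, mul_assoc]
    have hmp : (0:ℝ) ≤ (x + y) * D := mul_nonneg hxy.le hDpos.le
    have h1 := mul_le_mul_of_nonneg_right hB hmp
    have h2 : (x + y) ^ (p - 1) * ((x + y) * D) = (x + y) ^ 2 := by
      linear_combination (x + y) * hDp
    have h3 : (p - 1) * (x + y) ^ 2 ≤ (x + y) ^ 2 := by nlinarith [sq_nonneg (x + y)]
    calc (p - 1) * (x + y) ^ 2 ≤ (x + y) ^ 2 := h3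
      _ = (x + y) ^ (p - 1) * ((x + y) * D) := h2.symm
      _ ≤ (x ^ (p - 1) + y ^ (p - 1)) * ((x + y) * D) := h1
  -- endpoint t = xy
  have hE2 : (p - 1) * (x - y) ^ 2 ≤
      (x ^ (p - 2) * x ^ 2 + y ^ (p - 2) * y ^ 2 - (x ^ (p - 2) + y ^ (p - 2)) * (x * y)) * D := by
    have hdiff : x ^ (p - 2) * x ^ 2 + y ^ (p - 2) * y ^ 2 - (x ^ (p - 2) + y ^ (p - 2)) * (x * y)
        = (x ^ (p - 1) - y ^ (p - 1)) * (x - y) := by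
      linear_combination (x - y) * ex1 + (y - x) * ey1
    rw [hdiff]
    have hC : (p - 1) * (x - y) ^ 2 * (x + y) ^ (p - 2) ≤
        (x ^ (p - 1) - y ^ (p - 1)) * (x - y) := by
      rcases le_total y x with h | h
      · exact auxC p x y hp1 hp2 hy h hxy
      · have h' := auxC p y x hp1 hp2 hx h (by linarith)
        rw [add_comm y x] at h'
        nlinarith [h']
    calc (p - 1) * (x - y) ^ 2
        = (p - 1) * (x - y) ^ 2 * (x + y) ^ (p - 2) * D := by
          linear_combination (-((p - 1) * (x - y) ^ 2)) * hDinv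
      _ ≤ (x ^ (p - 1) - y ^ (p - 1)) * (x - y) * D :=
          mul_le_mul_of_nonneg_right hC hDpos.le
  rw [div_le_iff₀ hDpos]
  rcases le_total ((x ^ (p - 2) + y ^ (p - 2)) * D) (2 * (p - 1)) with h | h
  · have hprod : (0:ℝ) ≤ (2 * (p - 1) - (x ^ (p - 2) + y ^ (p - 2)) * D) * (t + x * y) :=
      mul_nonneg (by linarith) (by linarith)
    nlinarith [hE1, hprod]
  · have hprod : (0:ℝ) ≤ ((x ^ (p - 2) + y ^ (p - 2)) * D - 2 * (p - 1)) * (x * y - t) :=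
      mul_nonneg (by linarith) (by linarith)
    nlinarith [hE2, hprod]


/-- Monotonicity of the `p`-Laplacian vector field `ξ ↦ ‖ξ‖^{p-2} ξ` in the singular case
`1 < p < 2`: there is `C_p > 0` with
`⟨‖a‖^{p-2} a - ‖b‖^{p-2} b, a - b⟩ ≥ C_p ‖a - b‖² / (‖a‖ + ‖b‖)^{2-p}` for `(a,b) ≠ (0,0)`.
(Here `‖ξ‖^{p-2} ξ` is `0` when `ξ = 0`, which is automatic for the real power `0^{p-2} = 0`.) -/
theorem pLaplace_monotonicity_singular {E : Type*} [NormedAddCommGroup E]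
    [InnerProductSpace ℝ E] (p : ℝ) (hp1 : 1 < p) (hp2 : p < 2) :
    ∃ Cp : ℝ, 0 < Cp ∧ ∀ a b : E, (a, b) ≠ (0, 0) →
      Cp * ‖a - b‖ ^ 2 / (‖a‖ + ‖b‖) ^ (2 - p) ≤
        (inner ℝ (‖a‖ ^ (p - 2) • a - ‖b‖ ^ (p - 2) • b) (a - b) : ℝ) := by
  refine ⟨p - 1, by linarith, fun a b hab => ?_⟩
  have hab' : a ≠ 0 ∨ b ≠ 0 := by
    by_contra h
    push_neg at h
    exact hab (by simp [h.1, h.2])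
  have hxy : 0 < ‖a‖ + ‖b‖ := by
    rcases hab' with h | h
    · have := norm_pos_iff.mpr h
      have := norm_nonneg b
      linarith
    · have := norm_pos_iff.mpr h
      have := norm_nonneg a
      linarith
  have expand : (inner ℝ (‖a‖ ^ (p - 2) • a - ‖b‖ ^ (p - 2) • b) (a - b) : ℝ)
      = ‖a‖ ^ (p - 2) * ‖a‖ ^ 2 + ‖b‖ ^ (p - 2) * ‖b‖ ^ 2
        - (‖a‖ ^ (p - 2) + ‖b‖ ^ (p - 2)) * (inner ℝ a b : ℝ) := by
    rw [inner_sub_left, inner_sub_right, inner_sub_right, real_inner_smul_left,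
      real_inner_smul_left, real_inner_smul_left, real_inner_smul_left,
      real_inner_self_eq_norm_sq, real_inner_self_eq_norm_sq, real_inner_comm b a]
    ring
  have hnormsq : ‖a - b‖ ^ 2 = ‖a‖ ^ 2 + ‖b‖ ^ 2 - 2 * (inner ℝ a b : ℝ) := by
    rw [norm_sub_sq_real]; ring
  have habs := abs_real_inner_le_norm a b
  rw [abs_le] at habs
  rw [expand, hnormsq]
  exact key p ‖a‖ ‖b‖ (inner ℝ a b : ℝ) hp1 hp2 (norm_nonneg a) (norm_nonneg b) hxy
    habs.1 habs.2
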